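/- If for every nontrivial element g of a group Γ there is a left-orderable group H and a homomorphism φ : Γ → H with φ(g) ≠ e, then Γ is left-orderable (i.e., residually left-orderable groups are left-orderable). -/

import Mathlib

/-- A group is left-orderable if it admits a left-invariant strict total order. -/
def LeftOrderable (G : Type*) [Group G] : Prop :=
  ∃ r : G → G → Prop, IsStrictTotalOrder G r ∧ ∀ a b c : G, r a b → r (c * a) (c * b)

/-- Residually left-orderable groups are left-orderable: if every nontrivial element
has a homomorphic image that is nontrivial in some left-orderable group, then the
group is left-orderable. -/
theorem leftOrderable_of_residually {G : Type*} [Group G]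
    (h : ∀ g : G, g ≠ 1 → ∃ (H : Type) (_ : Group H) (φ : G →* H),
      LeftOrderable H ∧ φ g ≠ 1) :
    LeftOrderable G := by
  classical
  -- index type: nontrivial elements of G
  set I := {g : G // g ≠ 1} with hI
  choose H inst φ hLO hne using fun i : I => h i.1 i.2
  choose r hsto hinv using hLO
  -- a well-order on I
  let w : I → I → Prop := WellOrderingRel
  have hwo : IsWellOrder I w := WellOrderingRel.isWellOrder
  have wf : WellFounded w := hwo.wf
  -- lexicographic comparison of the images in ∏ H i
  set R : G → G → Prop :=
    fun a b => ∃ i : I, (∀ j : I, w j i → φ j a = φ j b) ∧ r i (φ i a) (φ i b) with hR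
  haveI htri : IsTrichotomous G R := by
    refine Std.trichotomous_of_rel_or_eq_or_rel_swap ?_
    intro a b
    by_cases hab : a = b
    · exact Or.inr (Or.inl hab)
    · have hD : {i : I | φ i a ≠ φ i b}.Nonempty := by
        have h1 : a * b⁻¹ ≠ 1 := by
          intro hc; exact hab (by rwa [mul_inv_eq_one] at hc)
        refine ⟨⟨a * b⁻¹, h1⟩, ?_⟩
        intro heq
        apply hne ⟨a * b⁻¹, h1⟩
        simp only [map_mul, map_inv, heq, mul_inv_cancel]
      set i := wf.min _ hD with hi
      have hmem : φ i a ≠ φ i b := wf.min_mem _ hD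
      have hprev : ∀ j : I, w j i → φ j a = φ j b := by
        intro j hj
        by_contra hc
        exact wf.not_lt_min _ hc hj
      rcases (show r i (φ i a) (φ i b) ∨ φ i a = φ i b ∨ r i (φ i b) (φ i a) from by
          haveI := hsto i; exact trichotomous _ _) with h1 | h1 | h1
      · exact Or.inl ⟨i, hprev, h1⟩
      · exact absurd h1 hmem
      · exact Or.inr (Or.inr ⟨i, fun j hj => (hprev j hj).symm, h1⟩)
  haveI hirr : IsIrrefl G R := by
    constructor
    rintro a ⟨i, _, hr⟩
    exact (hsto i).irrefl _ hr
  haveI htr : IsTrans G R := by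
    constructor
    rintro a b c ⟨i, hib, hir⟩ ⟨j, hjb, hjr⟩
    rcases (show w i j ∨ i = j ∨ w j i from trichotomous _ _) with hij | hij | hij
    · refine ⟨i, fun k hk => (hib k hk).trans (hjb k (trans_of w hk hij)), ?_⟩
      rwa [← hjb i hij]
    · subst hij
      exact ⟨i, fun k hk => (hib k hk).trans (hjb k hk),
        (hsto i).trans _ _ _ hir hjr⟩
    · refine ⟨j, fun k hk => (hib k (trans_of w hk hij)).trans (hjb k hk), ?_⟩
      rwa [hib j hij]
  haveI : IsStrictOrder G R := ⟨⟩
  refine ⟨R, ⟨⟩, ?_⟩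
  rintro a b c ⟨i, hib, hir⟩
  refine ⟨i, fun j hj => by simp only [map_mul, hib j hj], ?_⟩
  simp only [map_mul]
  exact hinv i _ _ _ hir
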